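/- Let s ≥ 1 and let z ∈ ℝ^{N+1} be a vector with ‖z‖₁ ≤ √s + 1. Suppose C ∈ ℝ^{m×(N+1)} satisfies RIP₁,₂(8s+8, δ) with δ ≤ 1/5 and ‖Cz‖₁ ≥ 1 − δ. Then ‖z‖₂ ≥ 1/6. -/

import Mathlib

open Finset Matrix

/-- If `‖z‖₁ ≤ √s + 1`, `C` satisfies `RIP₁,₂(8s+8, δ)` with `δ ≤ 1/5`, and
`‖Cz‖₁ ≥ 1 − δ`, then `‖z‖₂ ≥ 1/6`. -/
theorem l2_lower_from_rip (m N s : ℕ) (hs : 1 ≤ s) (δ : ℝ) (hδ0 : 0 ≤ δ)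
    (hδ : δ ≤ 1 / 5) (C : Matrix (Fin m) (Fin (N + 1)) ℝ)
    (hRIP : ∀ v : Fin (N + 1) → ℝ,
      (Finset.univ.filter fun i => v i ≠ 0).card ≤ 8 * s + 8 →
      (1 - δ) * Real.sqrt (∑ i, v i ^ 2) ≤ ∑ i, |(C *ᵥ v) i| ∧
      ∑ i, |(C *ᵥ v) i| ≤ (1 + δ) * Real.sqrt (∑ i, v i ^ 2))
    (z : Fin (N + 1) → ℝ)
    (hz1 : (∑ i, |z i|) ≤ Real.sqrt s + 1)
    (hz2 : 1 - δ ≤ ∑ i, |(C *ᵥ z) i|) :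
    1 / 6 ≤ Real.sqrt (∑ i, z i ^ 2) := by
  classical
  set t : ℕ := 8 * s + 8 with ht
  have ht0 : 0 < t := by omega
  set σ : Equiv.Perm (Fin (N + 1)) := Tuple.sort (fun i => -|z i|) with hσ
  have hmono : Monotone ((fun i => -|z i|) ∘ σ) := Tuple.monotone_sort _
  set W : ℕ → ℝ := fun k => if h : k < N + 1 then |z (σ ⟨k, h⟩)| else 0 with hW
  have hWnn : ∀ k, 0 ≤ W k := by
    intro k; simp only [hW]; split <;> positivity
  have hWanti : ∀ a b : ℕ, a ≤ b → W b ≤ W a := by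
    intro a b hab
    by_cases hb : b < N + 1
    · have ha : a < N + 1 := lt_of_le_of_lt hab hb
      simp only [hW, dif_pos ha, dif_pos hb]
      have := hmono (a := ⟨a, ha⟩) (b := ⟨b, hb⟩) hab
      simpa using this
    · simp only [hW, dif_neg hb]; exact hWnn a
  have hWsum : ∀ M : ℕ, ∑ k ∈ Finset.range M, W k ≤ Real.sqrt s + 1 := by
    have hfin : ∑ k ∈ Finset.range (N + 1), W k = ∑ i, |z i| := by
      rw [Finset.sum_range]
      have : (fun i : Fin (N + 1) => W ↑i) = fun i => |z (σ i)| := by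
        funext i; simp [hW, i.isLt]; intro h; exact absurd i.isLt (by omega)
      rw [this]
      exact Equiv.sum_comp σ fun i => |z i|
    intro M
    rcases le_or_gt M (N + 1) with h | h
    · exact le_trans (le_trans (Finset.sum_le_sum_of_subset_of_nonneg
        (Finset.range_subset_range.mpr h) fun i _ _ => hWnn i) hfin.le) hz1
    · have hsplit : ∑ k ∈ Finset.range (N + 1), W k + ∑ k ∈ Finset.Ico (N + 1) M, W k
          = ∑ k ∈ Finset.range M, W k := by
        rw [Finset.range_eq_Ico, Finset.range_eq_Ico]
        exact Finset.sum_Ico_consecutive W (Nat.zero_le _) h.le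
      have hzero : ∑ k ∈ Finset.Ico (N + 1) M, W k = 0 := by
        refine Finset.sum_eq_zero fun k hk => ?_
        have : ¬ k < N + 1 := by
          have := (Finset.mem_Ico.mp hk).1; omega
        simp only [hW, dif_neg this]
      rw [← hsplit, hzero, add_zero, hfin]; exact hz1
  -- block decomposition
  set v : ℕ → Fin (N + 1) → ℝ :=
    fun j i => if (σ.symm i : ℕ) / t = j then z i else 0 with hv
  have hzdecomp : ∀ i, z i = ∑ j ∈ Finset.range (N + 1), v j i := by
    intro i
    have hj : (σ.symm i : ℕ) / t < N + 1 :=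
      lt_of_le_of_lt (Nat.div_le_self _ _) (σ.symm i).isLt
    rw [Finset.sum_eq_single ((σ.symm i : ℕ) / t)]
    · simp [hv]
    · intro b _ hb
      simp only [hv]; rw [if_neg (fun hc => hb hc.symm)]
    · intro h; exact absurd (Finset.mem_range.mpr hj) h
  set S : ℕ → Finset (Fin (N + 1)) :=
    fun j => Finset.univ.filter fun i => (σ.symm i : ℕ) / t = j with hS
  have hScard : ∀ j, (S j).card ≤ t := by
    intro j
    have : (S j).card ≤ (Finset.range t).card := by
      apply Finset.card_le_card_of_injOn (fun i => (σ.symm i : ℕ) % t)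
      · intro i _
        exact Finset.mem_range.mpr (Nat.mod_lt _ ht0)
      · intro a ha b hb hab
        simp only [hS, Finset.mem_coe, Finset.mem_filter, Finset.mem_univ, true_and] at ha hb
        have hab' : (σ.symm a : ℕ) % t = (σ.symm b : ℕ) % t := hab
        have hval : (σ.symm a : ℕ) = (σ.symm b : ℕ) := by
          conv_lhs => rw [← Nat.div_add_mod (σ.symm a : ℕ) t]
          conv_rhs => rw [← Nat.div_add_mod (σ.symm b : ℕ) t]
          rw [ha, hb, hab']
        have : σ.symm a = σ.symm b := Fin.ext hval
        simpa using congrArg σ this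
    simpa using this
  have hvcard : ∀ j, (Finset.univ.filter fun i => v j i ≠ 0).card ≤ 8 * s + 8 := by
    intro j
    refine le_trans (Finset.card_le_card ?_) (hScard j)
    intro i hi
    simp only [Finset.mem_filter, Finset.mem_univ, true_and] at hi
    simp only [hS, Finset.mem_filter, Finset.mem_univ, true_and]
    by_contra h
    exact hi (by simp [hv, h])
  -- ℓ2 bound for block 0
  have hv0 : Real.sqrt (∑ i, v 0 i ^ 2) ≤ Real.sqrt (∑ i, z i ^ 2) := by
    apply Real.sqrt_le_sqrt
    apply Finset.sum_le_sum
    intro i _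
    simp only [hv]
    split
    · exact le_rfl
    · simpa using sq_nonneg (z i)
  -- ℓ2 bound for later blocks
  have hvtail : ∀ j : ℕ, Real.sqrt (∑ i, v (j + 1) i ^ 2)
      ≤ Real.sqrt t * W ((j + 1) * t) := by
    intro j
    have hb : ∀ i, v (j + 1) i ^ 2 ≤ (if (σ.symm i : ℕ) / t = j + 1 then W ((j+1)*t) ^ 2 else 0) := by
      intro i
      simp only [hv]
      split
      · rename_i hcase
        have hge : (j + 1) * t ≤ (σ.symm i : ℕ) :=
          (Nat.le_div_iff_mul_le ht0).mp (le_of_eq hcase.symm)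
        have hWi : W ((σ.symm i : ℕ)) = |z i| := by
          have hlt : ((σ.symm i : ℕ)) < N + 1 := (σ.symm i).isLt
          simp only [hW, dif_pos hlt]
          congr 1
          rw [show (⟨(σ.symm i : ℕ), hlt⟩ : Fin (N+1)) = σ.symm i from rfl]
          exact congrArg z (σ.apply_symm_apply i)
        have h1 : |z i| ≤ W ((j + 1) * t) := by
          rw [← hWi]; exact hWanti _ _ hge
        calc z i ^ 2 = |z i| ^ 2 := (sq_abs _).symm
          _ ≤ W ((j + 1) * t) ^ 2 := by
              have := hWnn ((j+1)*t)
              nlinarith [abs_nonneg (z i)]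
      · simpa using sq_nonneg (0 : ℝ)
    have hsum : ∑ i, v (j + 1) i ^ 2 ≤ (S (j+1)).card * W ((j + 1) * t) ^ 2 := by
      calc ∑ i, v (j + 1) i ^ 2
          ≤ ∑ i, (if (σ.symm i : ℕ) / t = j + 1 then W ((j+1)*t) ^ 2 else 0) :=
            Finset.sum_le_sum fun i _ => hb i
        _ = ∑ i ∈ S (j+1), W ((j+1)*t) ^ 2 := by
            simp only [hS]; rw [Finset.sum_filter]
        _ = (S (j+1)).card * W ((j + 1) * t) ^ 2 := by
            rw [Finset.sum_const, nsmul_eq_mul]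
    have hsum2 : ∑ i, v (j + 1) i ^ 2 ≤ (t : ℝ) * W ((j + 1) * t) ^ 2 := by
      refine hsum.trans ?_
      have : ((S (j+1)).card : ℝ) ≤ (t : ℝ) := Nat.cast_le.mpr (hScard (j+1))
      nlinarith [sq_nonneg (W ((j+1)*t)), hWnn ((j+1)*t)]
    calc Real.sqrt (∑ i, v (j + 1) i ^ 2) ≤ Real.sqrt ((t : ℝ) * W ((j + 1) * t) ^ 2) :=
          Real.sqrt_le_sqrt hsum2
      _ = Real.sqrt t * W ((j + 1) * t) := by
          rw [Real.sqrt_mul (by positivity), Real.sqrt_sq (hWnn _)]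
  -- block average bound
  have havg : ∀ j : ℕ, (t : ℝ) * W ((j + 1) * t) ≤ ∑ k ∈ Finset.Ico (j * t) ((j + 1) * t), W k := by
    intro j
    have hcard : (Finset.Ico (j * t) ((j + 1) * t)).card = t := by
      rw [Nat.card_Ico]; ring_nf; omega
    have := Finset.card_nsmul_le_sum (Finset.Ico (j * t) ((j + 1) * t))
      W (W ((j + 1) * t)) (fun k hk => hWanti k ((j+1)*t) (le_of_lt (Finset.mem_Ico.mp hk).2))
    rw [hcard, nsmul_eq_mul] at this
    exact this
  -- telescoping of blocks
  have hblocks : ∀ n : ℕ, ∑ j ∈ Finset.range n, ∑ k ∈ Finset.Ico (j * t) ((j + 1) * t), W k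
      = ∑ k ∈ Finset.range (n * t), W k := by
    intro n
    induction n with
    | zero => simp
    | succ n ih =>
        rw [Finset.sum_range_succ, ih, Finset.range_eq_Ico, Finset.range_eq_Ico]
        exact Finset.sum_Ico_consecutive W (Nat.zero_le _) (Nat.mul_le_mul_right t (Nat.le_succ n))
  -- sqrt t bound
  set r : ℝ := Real.sqrt t with hr
  have hrsq : r ^ 2 = (t : ℝ) := Real.sq_sqrt (by positivity)
  have hrge : 2 * (Real.sqrt s + 1) ≤ r := by
    rw [hr]
    rw [show ((t : ℕ) : ℝ) = 8 * (s : ℝ) + 8 by push_cast [ht]; ring]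
    rw [← Real.sqrt_sq (by positivity : (0:ℝ) ≤ 2 * (Real.sqrt s + 1))]
    apply Real.sqrt_le_sqrt
    nlinarith [Real.sq_sqrt (show (0:ℝ) ≤ s by positivity), Real.sqrt_nonneg (s : ℝ),
      sq_nonneg (Real.sqrt s - 1)]
  have hr0 : 0 < r := by
    have : (0:ℝ) < 2 * (Real.sqrt s + 1) := by positivity
    linarith
  -- tail sum bound
  have htail : ∑ j ∈ Finset.range N, Real.sqrt (∑ i, v (j + 1) i ^ 2) ≤ 1 / 2 := by
    have h1 : ∀ j : ℕ, Real.sqrt (∑ i, v (j + 1) i ^ 2)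
        ≤ (∑ k ∈ Finset.Ico (j * t) ((j + 1) * t), W k) / r := by
      intro j
      refine (hvtail j).trans ?_
      rw [le_div_iff₀ hr0]
      have : r * W ((j + 1) * t) * r = (t : ℝ) * W ((j+1)*t) := by
        rw [mul_comm, ← mul_assoc, ← sq, hrsq]
      rw [this]
      exact havg j
    calc ∑ j ∈ Finset.range N, Real.sqrt (∑ i, v (j + 1) i ^ 2)
        ≤ ∑ j ∈ Finset.range N, (∑ k ∈ Finset.Ico (j * t) ((j + 1) * t), W k) / r :=
          Finset.sum_le_sum fun j _ => h1 j
      _ = (∑ j ∈ Finset.range N, ∑ k ∈ Finset.Ico (j * t) ((j + 1) * t), W k) / r := by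
          rw [Finset.sum_div]
      _ = (∑ k ∈ Finset.range (N * t), W k) / r := by rw [hblocks]
      _ ≤ (Real.sqrt s + 1) / r := by
          exact (div_le_div_iff_of_pos_right hr0).mpr (hWsum _)
      _ ≤ 1 / 2 := by
          rw [div_le_iff₀ hr0]
          have h2 : 0 ≤ Real.sqrt s + 1 := by positivity
          linarith
  -- main chain
  have hmv : (C *ᵥ z) = ∑ j ∈ Finset.range (N + 1), C *ᵥ v j := by
    have hzs : z = ∑ j ∈ Finset.range (N + 1), v j := by
      funext i; rw [Finset.sum_apply]; exact hzdecomp i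
    rw [hzs]
    simp only [← Matrix.mulVecLin_apply]
    exact map_sum (Matrix.mulVecLin C) v (Finset.range (N + 1))
  have hchain : 1 - δ ≤ (1 + δ) * ∑ j ∈ Finset.range (N + 1), Real.sqrt (∑ i, v j i ^ 2) := by
    refine hz2.trans ?_
    calc ∑ i, |(C *ᵥ z) i|
        = ∑ i, |∑ j ∈ Finset.range (N + 1), (C *ᵥ v j) i| := by
          rw [hmv]; congr 1; funext i; rw [Finset.sum_apply]
      _ ≤ ∑ i, ∑ j ∈ Finset.range (N + 1), |(C *ᵥ v j) i| :=
          Finset.sum_le_sum fun i _ => Finset.abs_sum_le_sum_abs _ _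
      _ = ∑ j ∈ Finset.range (N + 1), ∑ i, |(C *ᵥ v j) i| := Finset.sum_comm
      _ ≤ ∑ j ∈ Finset.range (N + 1), (1 + δ) * Real.sqrt (∑ i, v j i ^ 2) :=
          Finset.sum_le_sum fun j _ => (hRIP (v j) (hvcard j)).2
      _ = (1 + δ) * ∑ j ∈ Finset.range (N + 1), Real.sqrt (∑ i, v j i ^ 2) := by
          rw [Finset.mul_sum]
  have hsplit2 : ∑ j ∈ Finset.range (N + 1), Real.sqrt (∑ i, v j i ^ 2)
      = Real.sqrt (∑ i, v 0 i ^ 2)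
        + ∑ j ∈ Finset.range N, Real.sqrt (∑ i, v (j + 1) i ^ 2) := by
    rw [Finset.sum_range_succ']; ring
  have hA : 0 ≤ Real.sqrt (∑ i, z i ^ 2) := Real.sqrt_nonneg _
  have hfinal : 1 - δ ≤ (1 + δ) * (Real.sqrt (∑ i, z i ^ 2) + 1 / 2) := by
    refine hchain.trans ?_
    have h1 : (0:ℝ) < 1 + δ := by linarith
    apply mul_le_mul_of_nonneg_left _ (le_of_lt h1)
    rw [hsplit2]
    linarith [hv0, htail]
  nlinarith [hfinal, hA]
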